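/- For all integers n ≥ 1 and k ≥ 0, A(n,k) = 2^{−2n} · C(2n+k, 2n)^{−1} · ∑_{l=0}^{n} a(n,l) · C(2n+k, 2n+l). -/

import Mathlib

/-- `A(n,k) := (2·(2n)!/(2n+k)!) · ∑_{j=0}^{⌊k/2⌋} (−1)^j · C(k,j) · (k/2 − j)^{k+2n}` in `ℚ`. -/
def A (n k : ℕ) : ℚ :=
  (2 * (Nat.factorial (2 * n) : ℚ) / (Nat.factorial (2 * n + k) : ℚ)) *
    ∑ j ∈ Finset.range (k / 2 + 1),
      (-1 : ℚ) ^ j * (Nat.choose k j : ℚ) * ((k : ℚ) / 2 - (j : ℚ)) ^ (k + 2 * n)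

/-- Riordan's coefficients `a(n,l)`: `a(0,0) = 1`, `a(n,0) = 0` for `n ≥ 1`, and for `l ≥ 1`,
`a(n,l) = ∑_{i=l−1}^{n−1} a(i,l−1) · C(2n+l−1, 2n−2i)`. -/
def a : ℕ → ℕ → ℚ
  | 0, 0 => 1
  | _ + 1, 0 => 0
  | n, l + 1 => ∑ i ∈ Finset.Ico l n, a i l * (Nat.choose (2 * n + l) (2 * n - 2 * i) : ℚ)


open PowerSeries Finset

noncomputable def Eexp (c : ℚ) : PowerSeries ℚ := rescale c (PowerSeries.exp ℚ)

lemma coeff_Eexp (c : ℚ) (m : ℕ) : coeff (R := ℚ) m (Eexp c) = c ^ m / m.factorial := by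
  simp [Eexp, coeff_rescale, coeff_exp]
  ring

lemma Eexp_mul (b c : ℚ) : Eexp b * Eexp c = Eexp (b + c) :=
  PowerSeries.exp_mul_exp_eq_exp_add b c

lemma Eexp_zero : Eexp 0 = 1 := by
  rw [Eexp, rescale_zero]; simp

lemma Eexp_pow (c : ℚ) (j : ℕ) : (Eexp c) ^ j = Eexp (j * c) := by
  induction j with
  | zero => simp [Eexp_zero]
  | succ j ih =>
    rw [pow_succ, ih, Eexp_mul]
    norm_num
    ring_nf

lemma deriv_Eexp (c : ℚ) : d⁄dX ℚ (Eexp c) = C (R := ℚ) c * Eexp c := by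
  ext m
  rw [coeff_derivative, coeff_C_mul, coeff_Eexp, coeff_Eexp, Nat.factorial_succ]
  have h1 : ((m : ℚ) + 1) ≠ 0 := by positivity
  have h2 : ((m.factorial : ℚ)) ≠ 0 := by exact_mod_cast m.factorial_ne_zero
  push_cast
  field_simp
  ring

noncomputable def sh : PowerSeries ℚ := Eexp 1 - Eexp (-1)
noncomputable def vv : PowerSeries ℚ := sh - C (R := ℚ) 2 * X
noncomputable def ww : PowerSeries ℚ := Eexp 1 + Eexp (-1) - C (R := ℚ) 2

lemma deriv_vv : d⁄dX ℚ vv = ww := by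
  have hX : d⁄dX ℚ (C (R := ℚ) 2 * X : PowerSeries ℚ) = C (R := ℚ) 2 := by
    rw [Derivation.leibniz]
    simp
  rw [vv, sh, ww]
  rw [map_sub, map_sub, hX, deriv_Eexp, deriv_Eexp]
  simp only [map_one, one_mul, map_neg]
  ring

lemma coeff_vv (m : ℕ) : coeff (R := ℚ) m vv = if m % 2 = 1 ∧ m ≠ 1 then 2 / (m.factorial:ℚ) else 0 := by
  rw [vv, sh]
  rw [map_sub, map_sub, coeff_C_mul, coeff_Eexp, coeff_Eexp, PowerSeries.coeff_X]
  rcases Nat.even_or_odd m with he | ho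
  · rw [he.neg_one_pow]
    have h1 : m % 2 = 0 := Nat.even_iff.1 he
    have h2 : m ≠ 1 := by omega
    simp [h1, h2, if_neg (by omega : ¬ m = 1)]
  · rw [ho.neg_one_pow]
    have h1 : m % 2 = 1 := Nat.odd_iff.1 ho
    by_cases h2 : m = 1
    · subst h2; norm_num [Nat.factorial]
    · rw [if_neg h2, if_pos ⟨h1, h2⟩]
      ring
lemma coeff_ww (m : ℕ) : coeff (R := ℚ) m ww = if m % 2 = 0 ∧ m ≠ 0 then 2 / (m.factorial:ℚ) else 0 := by
  rw [ww]
  rw [map_sub, map_add, coeff_Eexp, coeff_Eexp, PowerSeries.coeff_C]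
  rcases Nat.even_or_odd m with he | ho
  · rw [he.neg_one_pow]
    have h1 : m % 2 = 0 := Nat.even_iff.1 he
    by_cases h2 : m = 0
    · subst h2; norm_num [Nat.factorial]
    · rw [if_neg h2, if_pos ⟨h1, h2⟩]
      ring
  · rw [ho.neg_one_pow]
    have h1 : m % 2 = 1 := Nat.odd_iff.1 ho
    have h2 : m ≠ 0 := by omega
    rw [if_neg (by omega : ¬ m = 0), if_neg (by omega : ¬ (m % 2 = 0 ∧ m ≠ 0))]
    ring

lemma constantCoeff_vv : constantCoeff (R := ℚ) vv = 0 := by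
  have := coeff_vv 0
  rw [coeff_zero_eq_constantCoeff] at this
  simpa using this

lemma a_zero_of_lt {n l : ℕ} (h : n < l) : a n l = 0 := by
  match l, h with
  | l + 1, h =>
    show a n (l+1) = 0
    rw [a]
    rw [Finset.Ico_eq_empty (by omega), Finset.sum_empty]

lemma a_zero_of_ne {n : ℕ} (h : n ≠ 0) : a n 0 = 0 := by
  match n, h with
  | n + 1, _ => rfl

noncomputable def vc (l m : ℕ) : ℚ :=
  if l ≤ m ∧ (m - l) % 2 = 0 then
    2 ^ l * (l.factorial : ℚ) * a ((m - l) / 2) l / (m.factorial : ℚ) else 0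

lemma coeff_vv_pow : ∀ l m, coeff (R := ℚ) m (vv ^ l) = vc l m := by
  intro l
  induction l with
  | zero =>
    intro m
    rw [pow_zero, coeff_one, vc]
    by_cases hm : m = 0
    · subst hm; norm_num [a]
    · rw [if_neg hm]
      by_cases h2 : (m - 0) % 2 = 0
      · rw [if_pos ⟨Nat.zero_le m, h2⟩, a_zero_of_ne (by omega)]
        simp
      · rw [if_neg (by tauto)]
  | succ l ih =>
    intro m
    match m with
    | 0 =>
      rw [coeff_zero_eq_constantCoeff, map_pow, constantCoeff_vv,
        zero_pow (Nat.succ_ne_zero l), vc, if_neg (by omega)]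
    | m + 1 =>
      have hder : d⁄dX ℚ (vv ^ (l+1)) = (l+1) • vv ^ l • ww := by
        rw [Derivation.leibniz_pow, Nat.add_sub_cancel, deriv_vv]
      have hco := congrArg (coeff (R := ℚ) m) hder
      rw [coeff_derivative] at hco
      have hsm : coeff (R := ℚ) m ((l+1) • vv ^ l • ww) = (l+1 : ℚ) * coeff (R := ℚ) m (vv ^ l * ww) := by
        rw [smul_eq_mul, map_nsmul, nsmul_eq_mul]
        push_cast
        ring
      rw [hsm] at hco
      have hmul : coeff (R := ℚ) m (vv ^ l * ww) =
          ∑ p ∈ range (m+1), vc l p *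
            (if (m - p) % 2 = 0 ∧ (m - p) ≠ 0 then 2 / ((m-p).factorial : ℚ) else 0) := by
        rw [PowerSeries.coeff_mul, Finset.Nat.sum_antidiagonal_eq_sum_range_succ_mk]
        exact Finset.sum_congr rfl (fun p _ => by rw [ih, coeff_ww])
      rw [hmul] at hco
      -- hco : coeff (m+1) (vv^(l+1)) * (m+1) = (l+1) * Σ
      have hm1 : ((m : ℚ) + 1) ≠ 0 := by positivity
      by_cases hc : l ≤ m ∧ (m - l) % 2 = 0
      · -- main case : m = 2*n + l
        obtain ⟨hlm, hpar⟩ := hc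
        set n := (m - l) / 2 with hn
        have hm : m = 2 * n + l := by omega
        -- evaluate the convolution sum
        have hS : ∑ p ∈ range (m+1), vc l p *
            (if (m - p) % 2 = 0 ∧ (m - p) ≠ 0 then 2 / ((m-p).factorial : ℚ) else 0)
            = ∑ i ∈ Finset.Ico l n, (2 ^ l * (l.factorial : ℚ) * a i l / ((2*i+l).factorial : ℚ))
                * (2 / ((2*n - 2*i).factorial : ℚ)) := by
          rw [← Finset.sum_subset (s₁ := (Finset.Ico l n).image (fun i => 2*i+l))
              (by intro p hp
                  simp only [Finset.mem_image, Finset.mem_Ico] at hp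
                  obtain ⟨i, ⟨_, hi⟩, rfl⟩ := hp
                  simp only [Finset.mem_range]
                  omega)]
          · rw [Finset.sum_image (by intro x _ y _ h; simp only at h; omega)]
            apply Finset.sum_congr rfl
            intro i hi
            simp only [Finset.mem_Ico] at hi
            rw [vc, if_pos ⟨by omega, by omega⟩,
                if_pos ⟨by omega, by omega⟩]
            have e1 : (2*i+l - l)/2 = i := by omega
            have e2 : m - (2*i+l) = 2*n - 2*i := by omega
            rw [e1, e2]
          · intro p hp hnp
            simp only [Finset.mem_range] at hp
            rw [vc]
            by_cases h1 : l ≤ p ∧ (p - l) % 2 = 0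
            · set i := (p - l) / 2 with hidef
              have hpi : p = 2*i + l := by omega
              by_cases h2 : i < n
              · -- then p must be in the image unless i < l, where a i l = 0
                by_cases h3 : l ≤ i
                · exfalso
                  apply hnp
                  simp only [Finset.mem_image, Finset.mem_Ico]
                  exact ⟨i, ⟨h3, h2⟩, hpi.symm⟩
                · rw [if_pos h1, a_zero_of_lt (by omega)]
                  simp
              · -- i ≥ n : then m - p = 0, second factor dies
                have : m - p = 0 := by omega
                rw [this, if_neg (by omega : ¬ ((0:ℕ) % 2 = 0 ∧ (0:ℕ) ≠ 0))]
                simp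
            · rw [if_neg h1]
              simp
        rw [hS] at hco
        -- now finish the arithmetic
        have hvN : vc (l+1) (m+1) =
            2 ^ (l+1) * ((l+1).factorial : ℚ) * a n (l+1) / ((m+1).factorial : ℚ) := by
          rw [vc, if_pos ⟨by omega, by omega⟩]
          congr 3
          omega
        rw [hvN]
        -- use hco : coeff * (m+1) = (l+1) * Σ
        rw [show a n (l+1) = ∑ i ∈ Finset.Ico l n, a i l * ((2*n+l).choose (2*n - 2*i) : ℚ) from by rw [a]]
        have hfac : ((m+1).factorial : ℚ) = ((m:ℚ)+1) * (m.factorial : ℚ) := by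
          rw [Nat.factorial_succ]; push_cast; ring
        have hcoeff : coeff (R := ℚ) (m+1) (vv ^ (l+1)) =
            ((l:ℚ)+1) * (∑ i ∈ Finset.Ico l n, (2 ^ l * (l.factorial : ℚ) * a i l / ((2*i+l).factorial : ℚ))
                * (2 / ((2*n - 2*i).factorial : ℚ))) / ((m:ℚ)+1) := by
          rw [eq_div_iff hm1]
          exact hco
        rw [hcoeff, hfac]
        rw [Finset.mul_sum, Finset.mul_sum, Finset.sum_div, Finset.sum_div]
        apply Finset.sum_congr rfl
        intro i hi
        simp only [Finset.mem_Ico] at hi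
        have keyN : ((2*n+l).choose (2*n - 2*i)) * (2*n - 2*i).factorial * (2*i+l).factorial
            = (2*n+l).factorial := by
          have h1 : 2*n - 2*i ≤ 2*n + l := by omega
          have := Nat.choose_mul_factorial_mul_factorial h1
          rwa [show 2*n + l - (2*n - 2*i) = 2*i + l by omega] at this
        have keyQ : (((2*n+l).choose (2*n - 2*i)) : ℚ) * ((2*n - 2*i).factorial : ℚ) * ((2*i+l).factorial : ℚ)
            = ((2*n+l).factorial : ℚ) := by exact_mod_cast keyN
        have hmfac : (m.factorial : ℚ) = ((2*n+l).factorial : ℚ) := by rw [hm]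
        have hfacsucc : (((l+1).factorial : ℚ)) = ((l:ℚ)+1) * (l.factorial : ℚ) := by
          rw [Nat.factorial_succ]; push_cast; ring
        rw [hmfac, hfacsucc]
        have nz1 : ((2*i+l).factorial : ℚ) ≠ 0 := by exact_mod_cast Nat.factorial_ne_zero _
        have nz2 : ((2*n-2*i).factorial : ℚ) ≠ 0 := by exact_mod_cast Nat.factorial_ne_zero _
        have nz3 : ((2*n+l).factorial : ℚ) ≠ 0 := by exact_mod_cast Nat.factorial_ne_zero _
        have nzC : (((2*n+l).choose (2*n - 2*i)) : ℚ) ≠ 0 := by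
          exact_mod_cast Nat.ne_of_gt (Nat.choose_pos (by omega))
        rw [← keyQ]
        field_simp
        ring
      · -- degenerate case : everything is 0
        have hS0 : ∑ p ∈ range (m+1), vc l p *
            (if (m - p) % 2 = 0 ∧ (m - p) ≠ 0 then 2 / ((m-p).factorial : ℚ) else 0) = 0 := by
          apply Finset.sum_eq_zero
          intro p hp
          simp only [Finset.mem_range] at hp
          rw [vc]
          by_cases h1 : l ≤ p ∧ (p - l) % 2 = 0
          · rw [if_pos h1, if_neg (by omega)]
            simp
          · rw [if_neg h1]
            simp
        rw [hS0, mul_zero] at hco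
        have : coeff (R := ℚ) (m+1) (vv ^ (l+1)) = 0 := by
          have := mul_eq_zero.1 hco
          tauto
        rw [this, vc, if_neg (by omega)]

lemma coeff_C_mul_Eexp (q c : ℚ) (M : ℕ) :
    coeff (R := ℚ) M (C (R := ℚ) q * Eexp c) = q * c ^ M / M.factorial := by
  rw [coeff_C_mul, coeff_Eexp]
  ring

lemma coeff_sh_pow_alt (n k : ℕ) :
    coeff (R := ℚ) (k + 2*n) (sh ^ k) =
      (∑ j ∈ range (k+1), (-1 : ℚ) ^ j * (k.choose j : ℚ) * ((k:ℚ) - 2*j) ^ (k + 2*n))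
        / ((k + 2*n).factorial : ℚ) := by
  rw [sh, sub_pow, map_sum, Finset.sum_div]
  apply Finset.sum_congr rfl
  intro j hj
  rw [Finset.mem_range] at hj
  have hjk : j ≤ k := by omega
  have hterm : (-1 : PowerSeries ℚ) ^ (j + k) * Eexp 1 ^ j * Eexp (-1) ^ (k - j)
      * ((k.choose j : ℕ) : PowerSeries ℚ)
      = C (R := ℚ) ((-1 : ℚ) ^ (j+k) * (k.choose j : ℚ)) * Eexp (2*(j:ℚ) - (k:ℚ)) := by
    rw [Eexp_pow, Eexp_pow, map_mul, map_pow, map_neg, map_one, ← map_natCast (C (R := ℚ)) (k.choose j)]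
    have : Eexp (↑j * 1) * Eexp (↑(k - j) * -1) = Eexp (2*(j:ℚ) - (k:ℚ)) := by
      rw [Eexp_mul]
      congr 1
      rw [Nat.cast_sub hjk]
      ring
    rw [← this]
    ring
  rw [hterm, coeff_C_mul_Eexp]
  have h1 : (2*(j:ℚ) - (k:ℚ)) ^ (k + 2*n) = (-1 : ℚ) ^ (k + 2*n) * ((k:ℚ) - 2*j) ^ (k + 2*n) := by
    rw [show (2*(j:ℚ) - (k:ℚ)) = -((k:ℚ) - 2*j) by ring, neg_pow]
  rw [h1]
  have h2 : (-1 : ℚ) ^ (j + k) * (-1 : ℚ) ^ (k + 2*n) = (-1 : ℚ) ^ j := by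
    rw [← pow_add, show j + k + (k + 2*n) = j + 2*(k+n) by ring, pow_add, pow_mul]
    norm_num
  linear_combination (((k:ℚ) - 2*j) ^ (k + 2*n) * (k.choose j : ℚ) / (((k + 2*n).factorial : ℚ))) * h2

lemma coeff_sh_pow_a (n k : ℕ) :
    coeff (R := ℚ) (k + 2*n) (sh ^ k) =
      2 ^ k * ∑ l ∈ range (k+1),
        (k.choose l : ℚ) * (l.factorial : ℚ) * a n l / ((2*n+l).factorial : ℚ) := by
  have hsh : sh = vv + C (R := ℚ) 2 * X := by rw [vv]; ring
  rw [hsh, add_pow, map_sum, Finset.mul_sum]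
  apply Finset.sum_congr rfl
  intro l hl
  rw [Finset.mem_range] at hl
  have hlk : l ≤ k := by omega
  have hterm : vv ^ l * (C (R := ℚ) 2 * X) ^ (k - l) * ((k.choose l : ℕ) : PowerSeries ℚ)
      = C (R := ℚ) (2 ^ (k-l) * (k.choose l : ℚ)) * (vv ^ l * X ^ (k - l)) := by
    rw [mul_pow, ← map_pow, map_mul, ← map_natCast (C (R := ℚ)) (k.choose l)]
    ring
  rw [hterm, coeff_C_mul]
  rw [show k + 2*n = (2*n+l) + (k-l) by omega, coeff_mul_X_pow, coeff_vv_pow, vc,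
    if_pos ⟨by omega, by omega⟩]
  rw [show (2*n+l-l)/2 = n by omega]
  have h2 : (2:ℚ) ^ (k-l) * 2 ^ l = 2 ^ k := by
    rw [← pow_add]
    congr 1
    omega
  field_simp
  linear_combination ((k.choose l : ℚ) * a n l) * h2

lemma full_eq_two_mul_half (n k : ℕ) (hn : 1 ≤ n) :
    ∑ j ∈ range (k+1), (-1 : ℚ) ^ j * (k.choose j : ℚ) * ((k:ℚ)/2 - j) ^ (k + 2*n)
      = 2 * ∑ j ∈ range (k/2+1), (-1 : ℚ) ^ j * (k.choose j : ℚ) * ((k:ℚ)/2 - j) ^ (k + 2*n) := by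
  set f : ℕ → ℚ := fun j => (-1 : ℚ) ^ j * (k.choose j : ℚ) * ((k:ℚ)/2 - j) ^ (k + 2*n) with hf
  have hrefl : ∀ j ≤ k, f (k - j) = f j := by
    intro j hj
    simp only [hf]
    rw [Nat.choose_symm hj, Nat.cast_sub hj]
    have hs : (-1 : ℚ) ^ (k - j) = (-1 : ℚ) ^ (k + j) := by
      rw [show k + j = (k - j) + 2*j by omega, pow_add, pow_mul]
      norm_num
    have hp : ((k:ℚ)/2 - ((k:ℚ) - j)) ^ (k + 2*n)
        = (-1 : ℚ) ^ (k + 2*n) * ((k:ℚ)/2 - j) ^ (k + 2*n) := by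
      rw [show (k:ℚ)/2 - ((k:ℚ) - j) = -((k:ℚ)/2 - j) by ring, neg_pow]
    rw [hs, hp]
    have hsgn : (-1 : ℚ) ^ (k + j) * (-1 : ℚ) ^ (k + 2*n) = (-1 : ℚ) ^ j := by
      rw [← pow_add, show k + j + (k + 2*n) = j + 2*(k+n) by ring, pow_add, pow_mul]
      norm_num
    linear_combination ((k.choose j : ℚ) * ((k:ℚ)/2 - j) ^ (k + 2*n)) * hsgn
  have hsplit : (∑ j ∈ range (k/2+1), f j) + ∑ j ∈ Finset.Ico (k/2+1) (k+1), f j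
      = ∑ j ∈ range (k+1), f j := by
    simp only [Finset.range_eq_Ico]
    exact Finset.sum_Ico_consecutive f (by omega) (by omega)
  have htail : ∑ j ∈ Finset.Ico (k/2+1) (k+1), f j = ∑ j ∈ range (k - k/2), f j := by
    apply Finset.sum_nbij' (i := fun j => k - j) (j := fun j => k - j)
    · intro a ha
      simp only [Finset.mem_Ico] at ha
      simp only [Finset.mem_range]
      omega
    · intro a ha
      simp only [Finset.mem_range] at ha
      simp only [Finset.mem_Ico]
      omega
    · intro a ha
      simp only [Finset.mem_Ico] at ha
      omega
    · intro a ha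
      simp only [Finset.mem_range] at ha
      omega
    · intro a ha
      simp only [Finset.mem_Ico] at ha
      rw [hrefl a (by omega)]
  rcases Nat.even_or_odd k with he | ho
  · -- k even : k - k/2 = k/2 and f (k/2) = 0
    obtain ⟨t, rfl⟩ := he
    have h1 : t + t - (t + t)/2 = t := by omega
    have h2 : (t+t)/2 = t := by omega
    have hmid : f t = 0 := by
      simp only [hf]
      have : ((t:ℚ) + t)/2 - t = 0 := by push_cast; ring
      rw [show (((t+t : ℕ)):ℚ) = (t:ℚ) + t by push_cast; ring, this,
        zero_pow (by omega : t + t + 2*n ≠ 0)]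
      ring
    have hhalf : ∑ j ∈ range ((t+t)/2+1), f j = (∑ j ∈ range t, f j) + f t := by
      rw [h2, Finset.sum_range_succ]
    rw [← hsplit, htail, h1, hhalf, hmid]
    ring
  · -- k odd : k - k/2 = k/2 + 1
    obtain ⟨t, rfl⟩ := ho
    have h1 : 2*t+1 - (2*t+1)/2 = (2*t+1)/2 + 1 := by omega
    rw [← hsplit, htail, h1]
    ring

/-- For all integers `n ≥ 1` and `k ≥ 0`,
`A(n,k) = 2^{−2n} · C(2n+k, 2n)⁻¹ · ∑_{l=0}^{n} a(n,l) · C(2n+k, 2n+l)`. -/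
theorem A_eq_riordan_sum (n k : ℕ) (hn : 1 ≤ n) :
    A n k =
      ((2 : ℚ) ^ (2 * n))⁻¹ * ((Nat.choose (2 * n + k) (2 * n) : ℚ))⁻¹ *
        ∑ l ∈ Finset.range (n + 1), a n l * (Nat.choose (2 * n + k) (2 * n + l) : ℚ) := by
  have h2half := full_eq_two_mul_half n k hn
  -- rewrite the full sum using power series
  have hnum : ∑ j ∈ range (k+1), (-1 : ℚ) ^ j * (k.choose j : ℚ) * ((k:ℚ)/2 - j) ^ (k + 2*n)
      = (∑ j ∈ range (k+1), (-1 : ℚ) ^ j * (k.choose j : ℚ) * ((k:ℚ) - 2*j) ^ (k + 2*n))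
        / 2 ^ (k + 2*n) := by
    rw [Finset.sum_div]
    apply Finset.sum_congr rfl
    intro j _
    rw [show (k:ℚ)/2 - j = ((k:ℚ) - 2*j)/2 by ring, div_pow]
    ring
  have hMfacne : ((k + 2*n).factorial : ℚ) ≠ 0 := by exact_mod_cast Nat.factorial_ne_zero _
  have hcoeffs : ∑ j ∈ range (k+1), (-1 : ℚ) ^ j * (k.choose j : ℚ) * ((k:ℚ) - 2*j) ^ (k + 2*n)
      = ((k + 2*n).factorial : ℚ) * (2 ^ k *
          ∑ l ∈ range (k+1), (k.choose l : ℚ) * (l.factorial : ℚ) * a n l / ((2*n+l).factorial : ℚ)) := by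
    have h1 := coeff_sh_pow_alt n k
    have h2 := coeff_sh_pow_a n k
    rw [h2] at h1
    field_simp at h1
    linarith [h1]
  -- relate the two binomial-weighted sums
  set cC : ℚ := ((2*n+k).choose (2*n) : ℚ) with hcC
  have hcCne : cC ≠ 0 := by
    rw [hcC]
    exact_mod_cast Nat.ne_of_gt (Nat.choose_pos (by omega))
  have hfac2n : ((2*n).factorial : ℚ) ≠ 0 := by exact_mod_cast Nat.factorial_ne_zero _
  have hterm : ∀ l, (k.choose l : ℚ) * (l.factorial : ℚ) / ((2*n+l).factorial : ℚ)
      = ((2*n+k).choose (2*n+l) : ℚ) / (cC * ((2*n).factorial : ℚ)) := by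
    intro l
    by_cases hlk : l ≤ k
    · rw [Nat.cast_choose ℚ hlk, Nat.cast_choose ℚ (show 2*n+l ≤ 2*n+k by omega),
        hcC, Nat.cast_choose ℚ (show 2*n ≤ 2*n+k by omega),
        show 2*n+k - (2*n+l) = k - l by omega, show 2*n+k - 2*n = k by omega]
      have nz1 : ((k-l).factorial : ℚ) ≠ 0 := by exact_mod_cast Nat.factorial_ne_zero _
      have nz2 : ((2*n+l).factorial : ℚ) ≠ 0 := by exact_mod_cast Nat.factorial_ne_zero _
      have nz3 : ((2*n+k).factorial : ℚ) ≠ 0 := by exact_mod_cast Nat.factorial_ne_zero _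
      have nz4 : ((l).factorial : ℚ) ≠ 0 := by exact_mod_cast Nat.factorial_ne_zero _
      have nz5 : ((k).factorial : ℚ) ≠ 0 := by exact_mod_cast Nat.factorial_ne_zero _
      field_simp
    · rw [Nat.choose_eq_zero_of_lt (by omega), Nat.choose_eq_zero_of_lt (by omega)]
      simp
  have hS2 : ∑ l ∈ range (k+1), (k.choose l : ℚ) * (l.factorial : ℚ) * a n l / ((2*n+l).factorial : ℚ)
      = (∑ l ∈ range (k+1), a n l * ((2*n+k).choose (2*n+l) : ℚ)) / (cC * ((2*n).factorial : ℚ)) := by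
    rw [Finset.sum_div]
    apply Finset.sum_congr rfl
    intro l _
    have := hterm l
    calc (k.choose l : ℚ) * (l.factorial : ℚ) * a n l / ((2*n+l).factorial : ℚ)
        = ((k.choose l : ℚ) * (l.factorial : ℚ) / ((2*n+l).factorial : ℚ)) * a n l := by ring
      _ = (((2*n+k).choose (2*n+l) : ℚ) / (cC * ((2*n).factorial : ℚ))) * a n l := by rw [this]
      _ = a n l * ((2*n+k).choose (2*n+l) : ℚ) / (cC * ((2*n).factorial : ℚ)) := by ring
  have hext : ∑ l ∈ range (k+1), a n l * ((2*n+k).choose (2*n+l) : ℚ)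
      = ∑ l ∈ range (n+1), a n l * ((2*n+k).choose (2*n+l) : ℚ) := by
    rcases le_total k n with h | h
    · apply Finset.sum_subset (Finset.range_subset_range.2 (by omega))
      intro l hl hnl
      simp only [Finset.mem_range] at hl hnl
      rw [Nat.choose_eq_zero_of_lt (by omega)]
      simp
    · symm
      apply Finset.sum_subset (Finset.range_subset_range.2 (by omega))
      intro l hl hnl
      simp only [Finset.mem_range] at hl hnl
      rw [a_zero_of_lt (by omega)]
      simp
  -- put everything together
  rw [A]
  have hhalf : ∑ j ∈ Finset.range (k/2+1), (-1 : ℚ) ^ j * (k.choose j : ℚ) * ((k:ℚ)/2 - j) ^ (k + 2*n)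
      = (∑ j ∈ range (k+1), (-1 : ℚ) ^ j * (k.choose j : ℚ) * ((k:ℚ)/2 - j) ^ (k + 2*n)) / 2 := by
    rw [h2half]
    ring
  rw [hhalf, hnum, hcoeffs, hS2, hext]
  have hfacswap : ((2*n+k).factorial : ℚ) = ((k+2*n).factorial : ℚ) := by
    rw [Nat.add_comm]
  rw [hfacswap]
  have hpow : (2:ℚ) ^ (k + 2*n) = 2 ^ k * 2 ^ (2*n) := by rw [pow_add]
  have h2ne : (2:ℚ) ^ (2*n) ≠ 0 := by positivity
  have h2kne : (2:ℚ) ^ k ≠ 0 := by positivity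
  rw [hpow]
  field_simp
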